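/- arXiv:1405.2006 — 2 statements merged into one kernel-verified Lean document; each statement's English description precedes it below -/
import Mathlib

section
/- If A is a PK×PK complex block matrix (with K×K blocks) and R ≥ K is an integer, then ‖T^{(P)}_{R,K}(A)‖ ≤ sup_{ν∈[0,1]} |a_K(ν)* Â a_K(ν)| ≤ ‖A‖, where Â = (1/P)∑_{p=1}^{P} A^{p,p}. If A is a K×K complex matrix and R ≤ K, then ‖T_{R,R}(A)‖ ≤ sup_{ν∈[0,1]} |a_K(ν)* A a_K(ν)| ≤ ‖A‖. -/
open MeasureTheory ProbabilityTheory Matrix Filter Topology Finset Kronecker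
open scoped Matrix.Norms.L2Operator

noncomputable section

/-- The Marcenko–Pastur distribution with parameters `s = σ²` and `c`. -/
def mpMeasure (s c : ℝ) : Measure ℝ :=
  ENNReal.ofReal (1 - 1/c) • Measure.dirac 0 +
    MeasureTheory.volume.withDensity
      (Set.indicator (Set.Icc (s*(1-Real.sqrt c)^2) (s*(1+Real.sqrt c)^2))
        (fun x => ENNReal.ofReal
          (Real.sqrt ((s*(1+Real.sqrt c)^2 - x) * (x - s*(1-Real.sqrt c)^2)) /
            (2*Real.pi*s*c*x))))

/-- Stieltjes transform of the Marcenko–Pastur distribution. -/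
def stT (s c : ℝ) (z : ℂ) : ℂ := ∫ x, ((x:ℂ) - z)⁻¹ ∂(mpMeasure s c)

def stTilde (s c : ℝ) (z : ℂ) : ℂ := -1 / (z * (1 + (s : ℂ) * (c : ℂ) * stT s c z))

def mpS0 (s c : ℝ) : Set ℝ := Set.Icc (s*(1-Real.sqrt c)^2) (s*(1+Real.sqrt c)^2)

def mpSupp (s c : ℝ) : Set ℝ := if 1 < c then mpS0 s c ∪ {0} else mpS0 s c

/-- The `ML × N` block-Hankel matrix built from the scalars `w`. -/
def hankelW (L N : ℕ) {M : ℕ} (w : Fin M → Fin (N + L - 1) → ℂ) :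
    Matrix (Fin M × Fin L) (Fin N) ℂ :=
  Matrix.of fun p j => w p.1 ⟨p.2.1 + j.1, by
    have h1 := p.2.isLt; have h2 := j.isLt; omega⟩

/-- `X ↦ (re X, im X)` indexed by a boolean. -/
def reim (x : ℂ) : Bool → ℝ := fun b => if b then x.re else x.im

/-- The family `(w i)` is i.i.d. complex Gaussian with independent real and imaginary
parts, each `N(0, σ²/(2N))`. -/
def IsGaussianFamily {Ω : Type*} [MeasurableSpace Ω] (μ : Measure Ω)
    (σ : ℝ) (N : ℕ) {ι : Type*} (w : ι → Ω → ℂ) : Prop :=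
  iIndepFun
      (fun p : ι × Bool => fun ω => reim (w p.1 ω) p.2) μ ∧
  ∀ p : ι × Bool,
    Measure.map (fun ω => reim (w p.1 ω) p.2) μ =
      gaussianReal 0 (Real.toNNReal (σ^2 / (2*N)))

/-- Resolvent `(A - z I)⁻¹`. -/
def resolv {n : Type*} [Fintype n] [DecidableEq n] (A : Matrix n n ℂ) (z : ℂ) :
    Matrix n n ℂ := (A - z • 1)⁻¹

/-- eigenvalues of W W^*. -/
def eigenW (L M N : ℕ) (w : Fin M → Fin (N + L - 1) → ℂ) : Fin M × Fin L → ℝ :=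
  (Matrix.isHermitian_mul_conjTranspose_self (hankelW L N w)).eigenvalues

/-- `τ^{(P)}(A)(k)`. -/
def tauP (P K : ℕ) (A : Matrix (Fin P × Fin K) (Fin P × Fin K) ℂ) (k : ℤ) : ℂ :=
  (1 / (P * K : ℂ)) * ∑ p : Fin P, ∑ i : Fin K, ∑ j : Fin K,
    if (i : ℤ) - (j : ℤ) = k then A (p, i) (p, j) else 0

/-- `T^{(P)}_{R,Q}(A)`. -/
def TmatP (P K R Q : ℕ) (A : Matrix (Fin P × Fin K) (Fin P × Fin K) ℂ) :
    Matrix (Fin R) (Fin R) ℂ :=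
  Matrix.of fun i j =>
    if |(i : ℤ) - (j : ℤ)| ≤ (Q : ℤ) - 1 then tauP P K A ((i : ℤ) - (j : ℤ)) else 0

/-- `τ(A)(k)` (case `P = 1`). -/
def tau1 (K : ℕ) (A : Matrix (Fin K) (Fin K) ℂ) (k : ℤ) : ℂ :=
  (1 / (K : ℂ)) * ∑ i : Fin K, ∑ j : Fin K,
    if (i : ℤ) - (j : ℤ) = k then A i j else 0

/-- `T_{R,Q}(A)` (case `P = 1`). -/
def Tmat1 (K R Q : ℕ) (A : Matrix (Fin K) (Fin K) ℂ) : Matrix (Fin R) (Fin R) ℂ :=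
  Matrix.of fun i j =>
    if |(i : ℤ) - (j : ℤ)| ≤ (Q : ℤ) - 1 then tau1 K A ((i : ℤ) - (j : ℤ)) else 0

/-- the vector `a_K(ν)`. -/
def aVec (K : ℕ) (ν : ℝ) : Fin K → ℂ :=
  fun k => (1 / Real.sqrt K : ℝ) * Complex.exp (2 * Real.pi * Complex.I * ν * k)

/-- Euclidean norm of a complex vector. -/
def vNorm {n : Type*} [Fintype n] (a : n → ℂ) : ℝ :=
  Real.sqrt (∑ i, ‖a i‖ ^ 2)

/-- Variance of a complex random variable. -/
def cvar {Ω : Type*} [MeasurableSpace Ω] (μ : Measure Ω) (X : Ω → ℂ) : ℝ :=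
  (∫ ω, ‖X ω‖ ^ 2 ∂μ) - ‖∫ ω, X ω ∂μ‖ ^ 2

/-- A nice polynomial: the coefficients up to the degree are positive constants. -/
def NicePoly (P : Polynomial ℝ) : Prop := ∀ n ≤ P.natDegree, 0 < P.coeff n

/-- `Â = (1/P) ∑_p A^{p,p}`. -/
def hatBlock (P K : ℕ) (A : Matrix (Fin P × Fin K) (Fin P × Fin K) ℂ) :
    Matrix (Fin K) (Fin K) ℂ :=
  Matrix.of fun i j => (1 / (P : ℂ)) * ∑ p : Fin P, A (p, i) (p, j)


/-! ### Auxiliary machinery for `statement3` -/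

private def eNaux (N : ℕ) (d : ℤ) (m : ℕ) : ℂ :=
  Complex.exp (2 * Real.pi * Complex.I * (d * m / N))

private lemma eNaux_mul (N : ℕ) (d d' : ℤ) (m : ℕ) :
    eNaux N d m * eNaux N d' m = eNaux N (d + d') m := by
  rw [eNaux, eNaux, eNaux, ← Complex.exp_add]
  congr 1
  push_cast
  ring

private lemma two_pi_I_ne' : (2 * Real.pi * Complex.I : ℂ) ≠ 0 := by
  simp [Real.pi_ne_zero, Complex.I_ne_zero]

private lemma eNaux_sum (N : ℕ) (hN : 0 < N) (d : ℤ) :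
    ∑ m : Fin N, eNaux N d m = if (N : ℤ) ∣ d then (N : ℂ) else 0 := by
  have hNC : (N : ℂ) ≠ 0 := Nat.cast_ne_zero.2 hN.ne'
  have hterm : ∀ m : Fin N,
      eNaux N d m = Complex.exp (2 * Real.pi * Complex.I * (d / N)) ^ (m : ℕ) := by
    intro m
    rw [eNaux, ← Complex.exp_nat_mul]
    congr 1
    push_cast
    ring
  set z : ℂ := Complex.exp (2 * Real.pi * Complex.I * (d / N)) with hz
  have hz_one : z = 1 ↔ (N : ℤ) ∣ d := by
    rw [hz, Complex.exp_eq_one_iff]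
    constructor
    · rintro ⟨n, hn⟩
      have hd : (d : ℂ) = n * N := by
        apply mul_left_cancel₀ two_pi_I_ne'
        field_simp at hn
        linear_combination (2 * Real.pi * Complex.I) * hn
      have : d = n * N := by exact_mod_cast hd
      exact ⟨n, by rw [this]; ring⟩
    · rintro ⟨c, rfl⟩
      exact ⟨c, by push_cast; field_simp⟩
  simp only [hterm]
  rw [Fin.sum_univ_eq_sum_range]
  by_cases h1 : z = 1
  · rw [if_pos (hz_one.1 h1)]
    simp [h1]
  · rw [if_neg (fun hdvd => h1 (hz_one.2 hdvd))]
    have hzN : z ^ N = 1 := by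
      rw [hz, ← Complex.exp_nat_mul, Complex.exp_eq_one_iff]
      refine ⟨d, ?_⟩
      field_simp
    have := geom_sum_mul z N
    rw [hzN, sub_self] at this
    exact (mul_eq_zero.1 this).resolve_right (sub_ne_zero.2 h1)

private lemma eNaux_conj (N : ℕ) (d : ℤ) (m : ℕ) :
    (starRingEnd ℂ) (eNaux N d m) = eNaux N (-d) m := by
  rw [eNaux, eNaux, ← Complex.exp_conj]
  congr 1
  simp [_root_.map_mul, map_div₀, Complex.conj_I, map_ofNat]
  ring

private lemma parseval' (N R : ℕ) (hN : 0 < N) (w : Fin R → ℂ) (d : Fin R → ℤ)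
    (hd : ∀ i i' : Fin R, (N : ℤ) ∣ (d i - d i') → i = i') :
    ∑ m : Fin N, ‖∑ i, w i * eNaux N (d i) m‖ ^ 2
      = N * ∑ i, ‖w i‖ ^ 2 := by
  have key : ∑ m : Fin N,
      ((∑ i, w i * eNaux N (d i) m) * (starRingEnd ℂ) (∑ i, w i * eNaux N (d i) m))
      = (N : ℂ) * ∑ i, (w i * (starRingEnd ℂ) (w i)) := by
    have expand : ∀ m : Fin N,
        (∑ i, w i * eNaux N (d i) m) * (starRingEnd ℂ) (∑ i, w i * eNaux N (d i) m)
        = ∑ i, ∑ i', (w i * (starRingEnd ℂ) (w i')) * eNaux N (d i - d i') m := by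
      intro m
      rw [map_sum, Finset.sum_mul_sum]
      refine Finset.sum_congr rfl fun i _ => Finset.sum_congr rfl fun i' _ => ?_
      rw [_root_.map_mul, eNaux_conj]
      have := eNaux_mul N (d i) (-(d i')) m
      rw [sub_eq_add_neg, ← this]
      ring
    simp only [expand]
    rw [Finset.sum_comm]
    have swap : ∀ i : Fin R,
        ∑ m : Fin N, ∑ i', (w i * (starRingEnd ℂ) (w i')) * eNaux N (d i - d i') m
        = ∑ i', (w i * (starRingEnd ℂ) (w i'))
            * (if (N:ℤ) ∣ (d i - d i') then (N:ℂ) else 0) := by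
      intro i
      rw [Finset.sum_comm]
      exact Finset.sum_congr rfl fun i' _ => by rw [← Finset.mul_sum, eNaux_sum N hN]
    simp only [swap]
    rw [Finset.mul_sum]
    refine Finset.sum_congr rfl fun i _ => ?_
    rw [Finset.sum_eq_single i]
    · simp
      ring
    · intro i' _ hne
      rw [if_neg (fun hdvd => hne (hd i i' hdvd).symm), mul_zero]
    · intro h; exact absurd (Finset.mem_univ i) h
  simp only [Complex.mul_conj] at key
  have : ((∑ m : Fin N, Complex.normSq (∑ i, w i * eNaux N (d i) m) : ℝ) : ℂ)
      = (((N : ℝ) * ∑ i, Complex.normSq (w i) : ℝ) : ℂ) := by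
    push_cast
    convert key using 2
  have hre := Complex.ofReal_inj.1 this
  simpa [Complex.sq_norm] using hre

private lemma vNorm_eq_norm' {n : Type*} [Fintype n] (a : n → ℂ) :
    vNorm a = ‖(WithLp.equiv 2 (n → ℂ)).symm a‖ := by
  simp [EuclideanSpace.norm_eq, vNorm]

private lemma vNorm_nonneg' {n : Type*} [Fintype n] (a : n → ℂ) : 0 ≤ vNorm a :=
  Real.sqrt_nonneg _

private lemma quadBound' {n : Type*} [Fintype n] [DecidableEq n]
    (A : Matrix n n ℂ) (x y : n → ℂ) :
    ‖star x ⬝ᵥ A.mulVec y‖ ≤ ‖A‖ * vNorm x * vNorm y := by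
  have h1 : star x ⬝ᵥ A.mulVec y
      = inner ℂ ((WithLp.equiv 2 (n → ℂ)).symm x)
          ((WithLp.equiv 2 (n → ℂ)).symm (A.mulVec y)) := by
    simp only [WithLp.equiv_symm_apply]
    rw [EuclideanSpace.inner_toLp_toLp, dotProduct_comm]
  rw [h1]
  calc ‖(inner ℂ ((WithLp.equiv 2 (n → ℂ)).symm x)
        ((WithLp.equiv 2 (n → ℂ)).symm (A.mulVec y)) : ℂ)‖
      ≤ ‖(WithLp.equiv 2 (n → ℂ)).symm x‖ * ‖(WithLp.equiv 2 (n → ℂ)).symm (A.mulVec y)‖ :=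
        norm_inner_le_norm _ _
    _ ≤ ‖(WithLp.equiv 2 (n → ℂ)).symm x‖ * (‖A‖ * ‖(WithLp.equiv 2 (n → ℂ)).symm y‖) := by
        apply mul_le_mul_of_nonneg_left _ (norm_nonneg _)
        exact Matrix.l2_opNorm_mulVec A _
    _ = ‖A‖ * vNorm x * vNorm y := by rw [vNorm_eq_norm', vNorm_eq_norm']; ring

private lemma opNorm_le_of_bilinear' {n : Type*} [Fintype n] [DecidableEq n]
    (T : Matrix n n ℂ) {S : ℝ} (hS : 0 ≤ S)
    (h : ∀ u v : n → ℂ, ‖star u ⬝ᵥ T.mulVec v‖ ≤ S * vNorm u * vNorm v) :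
    ‖T‖ ≤ S := by
  rw [Matrix.l2_opNorm_def]
  apply ContinuousLinearMap.opNorm_le_bound _ hS
  intro x
  set v : n → ℂ := WithLp.equiv 2 (n → ℂ) x with hv
  have hx : x = (WithLp.equiv 2 (n → ℂ)).symm v := rfl
  have happ : (Matrix.toEuclideanLin.trans LinearMap.toContinuousLinearMap T) x
      = (WithLp.equiv 2 (n → ℂ)).symm (T.mulVec v) := by
    show Matrix.toEuclideanLin T x = _
    rw [Matrix.toEuclideanLin_apply]
    rfl
  rw [happ, ← vNorm_eq_norm', hx, ← vNorm_eq_norm']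
  set w := T.mulVec v with hw
  have hq : ‖star w ⬝ᵥ w‖ = vNorm w ^ 2 := by
    have : star w ⬝ᵥ w = ((∑ i, Complex.normSq (w i) : ℝ) : ℂ) := by
      push_cast
      rw [dotProduct]
      exact Finset.sum_congr rfl fun i _ => by
        rw [Pi.star_apply, ← Complex.mul_conj (w i)]
        exact mul_comm _ _
    rw [this, Complex.norm_real,
      Real.norm_of_nonneg (Finset.sum_nonneg fun i _ => Complex.normSq_nonneg _),
      vNorm, Real.sq_sqrt (Finset.sum_nonneg fun i _ => by positivity)]
    exact Finset.sum_congr rfl fun i _ => (Complex.sq_norm _).symm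
  have hb := h w v
  rw [hq] at hb
  rcases le_or_gt (vNorm w) 0 with hw0 | hw0
  · have : vNorm w = 0 := le_antisymm hw0 (vNorm_nonneg' _)
    rw [this]
    exact mul_nonneg hS (vNorm_nonneg' v)
  · nlinarith [vNorm_nonneg' v]

private lemma aVec_eval' (K N : ℕ) (m : ℕ) (k : Fin K) :
    aVec K ((m : ℝ)/N) k = ((1 / Real.sqrt K : ℝ) : ℂ) * eNaux N (k : ℤ) m := by
  rw [aVec, eNaux]
  congr 2
  push_cast
  ring

private lemma f_eval' (K : ℕ) (M : Matrix (Fin K) (Fin K) ℂ) (N : ℕ) (m : ℕ) :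
    star (aVec K ((m : ℝ)/N)) ⬝ᵥ M.mulVec (aVec K ((m : ℝ)/N))
      = (1/(K:ℂ)) * ∑ i : Fin K, ∑ j : Fin K, M i j * eNaux N ((j:ℤ)-(i:ℤ)) m := by
  rw [dotProduct, Finset.mul_sum]
  refine Finset.sum_congr rfl fun i _ => ?_
  rw [Pi.star_apply, Matrix.mulVec, dotProduct, Finset.mul_sum, Finset.mul_sum]
  refine Finset.sum_congr rfl fun j _ => ?_
  rw [aVec_eval', aVec_eval', RCLike.star_def, _root_.map_mul, eNaux_conj, Complex.conj_ofReal]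
  have h1 : ((1 / Real.sqrt K : ℝ) : ℂ) * ((1 / Real.sqrt K : ℝ) : ℂ) = 1/(K:ℂ) := by
    rw [← Complex.ofReal_mul]
    rw [show (1 / Real.sqrt K) * (1 / Real.sqrt K) = 1 / (Real.sqrt K * Real.sqrt K) by ring,
      Real.mul_self_sqrt (Nat.cast_nonneg K)]
    push_cast
    rfl
  have h2 : eNaux N (-(i:ℤ)) m * eNaux N (j:ℤ) m = eNaux N ((j:ℤ)-(i:ℤ)) m := by
    rw [eNaux_mul]; congr 1; ring
  calc ((1 / Real.sqrt K : ℝ) : ℂ) * eNaux N (-(i:ℤ)) m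
        * (M i j * (((1 / Real.sqrt K : ℝ) : ℂ) * eNaux N (j:ℤ) m))
      = (((1 / Real.sqrt K : ℝ) : ℂ) * ((1 / Real.sqrt K : ℝ) : ℂ))
        * (M i j * (eNaux N (-(i:ℤ)) m * eNaux N (j:ℤ) m)) := by ring
    _ = 1/(K:ℂ) * (M i j * eNaux N ((j:ℤ)-(i:ℤ)) m) := by rw [h1, h2]

private lemma T_entry' (K R : ℕ) (hK : 0 < K) (hR : 0 < R) (M : Matrix (Fin K) (Fin K) ℂ)
    (i j : Fin R) :
    tau1 K M ((i:ℤ)-(j:ℤ))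
      = (1/((K+R : ℕ):ℂ)) * ∑ m : Fin (K+R),
          (star (aVec K ((m:ℝ)/(K+R : ℕ))) ⬝ᵥ M.mulVec (aVec K ((m:ℝ)/(K+R : ℕ))))
            * eNaux (K+R) ((i:ℤ)-(j:ℤ)) m := by
  set N := K + R with hNdef
  set k : ℤ := (i:ℤ)-(j:ℤ) with hk
  have hN : 0 < N := by omega
  have hNC : ((N:ℕ) : ℂ) ≠ 0 := Nat.cast_ne_zero.2 hN.ne'
  have step1 : ∀ m : Fin N,
      (star (aVec K ((m:ℝ)/(N:ℕ))) ⬝ᵥ M.mulVec (aVec K ((m:ℝ)/(N:ℕ)))) * eNaux N k m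
      = (1/(K:ℂ)) * ∑ i' : Fin K, ∑ j' : Fin K, M i' j' * eNaux N (((j':ℤ)-(i':ℤ)) + k) m := by
    intro m
    rw [f_eval' K M N m, mul_assoc]
    congr 1
    rw [Finset.sum_mul]
    refine Finset.sum_congr rfl fun i' _ => ?_
    rw [Finset.sum_mul]
    refine Finset.sum_congr rfl fun j' _ => ?_
    rw [mul_assoc, eNaux_mul]
  simp only [step1]
  rw [← Finset.mul_sum]
  rw [show ∑ m : Fin N, ∑ i' : Fin K, ∑ j' : Fin K, M i' j' * eNaux N (((j':ℤ)-(i':ℤ)) + k) m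
      = ∑ i' : Fin K, ∑ j' : Fin K, ∑ m : Fin N, M i' j' * eNaux N (((j':ℤ)-(i':ℤ)) + k) m from
    (Finset.sum_comm).trans (Finset.sum_congr rfl fun i' _ => Finset.sum_comm)]
  have step2 : ∀ (i' j' : Fin K),
      ∑ m : Fin N, M i' j' * eNaux N (((j':ℤ)-(i':ℤ)) + k) m
      = (N : ℂ) * (if (i':ℤ) - (j':ℤ) = k then M i' j' else 0) := by
    intro i' j'
    rw [← Finset.mul_sum, eNaux_sum N hN]
    have hiR : (i:ℤ) < R := by exact_mod_cast i.isLt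
    have hjR : (j:ℤ) < R := by exact_mod_cast j.isLt
    have hiK : (i':ℤ) < K := by exact_mod_cast i'.isLt
    have hjK : (j':ℤ) < K := by exact_mod_cast j'.isLt
    have hi0 : (0:ℤ) ≤ i := Int.ofNat_nonneg _
    have hj0 : (0:ℤ) ≤ j := Int.ofNat_nonneg _
    have hi0' : (0:ℤ) ≤ i' := Int.ofNat_nonneg _
    have hj0' : (0:ℤ) ≤ j' := Int.ofNat_nonneg _
    have hiff : ((N:ℤ) ∣ ((j':ℤ)-(i':ℤ)) + k) ↔ ((i':ℤ) - (j':ℤ) = k) := by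
      constructor
      · intro hdvd
        by_contra hne
        have hne0 : ((j':ℤ)-(i':ℤ)) + k ≠ 0 := fun h0 => hne (by omega)
        have hle := Int.le_of_dvd (abs_pos.2 hne0) ((dvd_abs _ _).2 hdvd)
        have : |((j':ℤ)-(i':ℤ)) + k| < N := by
          rw [abs_lt, hk]
          constructor <;> omega
        omega
      · intro heq
        have : ((j':ℤ)-(i':ℤ)) + k = 0 := by omega
        rw [this]
        exact dvd_zero _
    by_cases hc : (i':ℤ) - (j':ℤ) = k
    · rw [if_pos (hiff.2 hc), if_pos hc, mul_comm]
    · rw [if_neg (fun h => hc (hiff.1 h)), if_neg hc, mul_zero, mul_zero]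
  simp only [step2]
  rw [tau1]
  have : ∑ i' : Fin K, ∑ j' : Fin K, (N:ℂ) * (if (i':ℤ) - (j':ℤ) = k then M i' j' else 0)
      = (N:ℂ) * ∑ i' : Fin K, ∑ j' : Fin K, (if (i':ℤ) - (j':ℤ) = k then M i' j' else 0) := by
    rw [Finset.mul_sum]
    exact Finset.sum_congr rfl fun i' _ => (Finset.mul_sum _ _ _).symm
  rw [this]
  field_simp

private lemma fin_eq_of_dvd' (N R : ℕ) (hRN : R ≤ N) (i i' : Fin R)
    (h : (N:ℤ) ∣ ((i:ℤ) - (i':ℤ))) : i = i' := by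
  have hi := i.isLt
  have hi' := i'.isLt
  by_cases hne : (i:ℤ) - (i':ℤ) = 0
  · exact Fin.ext (by omega)
  · have hle := Int.le_of_dvd (abs_pos.2 hne) ((dvd_abs _ _).2 h)
    rcases abs_cases ((i:ℤ) - (i':ℤ)) with ⟨he, _⟩ | ⟨he, _⟩ <;> omega

private lemma core' (K R : ℕ) (hK : 0 < K) (hR : 0 < R) (M : Matrix (Fin K) (Fin K) ℂ)
    (T : Matrix (Fin R) (Fin R) ℂ)
    (hT : ∀ i j : Fin R, T i j = tau1 K M ((i:ℤ) - (j:ℤ)))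
    (S : ℝ) (hS0 : 0 ≤ S)
    (hfS : ∀ ν ∈ Set.Icc (0:ℝ) 1,
      ‖star (aVec K ν) ⬝ᵥ M.mulVec (aVec K ν)‖ ≤ S) :
    ‖T‖ ≤ S := by
  have hTE := fun (i j : Fin R) => T_entry' K R hK hR M i j
  obtain ⟨N, hNdef⟩ : ∃ N, N = K + R := ⟨K + R, rfl⟩
  rw [← hNdef] at hTE
  have hN : 0 < N := by omega
  have hRN : R ≤ N := by omega
  have hNC : ((N:ℕ) : ℂ) ≠ 0 := Nat.cast_ne_zero.2 hN.ne'
  have hNR : (0:ℝ) < (N:ℝ) := by exact_mod_cast hN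
  set f : ℕ → ℂ := fun m =>
    star (aVec K ((m:ℝ)/(N:ℕ))) ⬝ᵥ M.mulVec (aVec K ((m:ℝ)/(N:ℕ))) with hf
  apply opNorm_le_of_bilinear' T hS0
  intro u v
  set U : Fin N → ℂ := fun m => ∑ i : Fin R, (starRingEnd ℂ) (u i) * eNaux N (i:ℤ) m with hU
  set V : Fin N → ℂ := fun m => ∑ j : Fin R, v j * eNaux N (-(j:ℤ)) m with hV
  have hterm : ∀ m : Fin N, f m * (U m * V m)
      = ∑ i : Fin R, ∑ j : Fin R,
          (starRingEnd ℂ) (u i) * (f m * eNaux N ((i:ℤ)-(j:ℤ)) m) * v j := by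
    intro m
    rw [hU, hV, Finset.sum_mul_sum, Finset.mul_sum]
    refine Finset.sum_congr rfl fun i _ => ?_
    rw [Finset.mul_sum]
    refine Finset.sum_congr rfl fun j _ => ?_
    have he : eNaux N (i:ℤ) m * eNaux N (-(j:ℤ)) m = eNaux N ((i:ℤ)-(j:ℤ)) m := by
      rw [eNaux_mul, ← sub_eq_add_neg]
    calc f m * ((starRingEnd ℂ) (u i) * eNaux N (i:ℤ) m * (v j * eNaux N (-(j:ℤ)) m))
        = (starRingEnd ℂ) (u i) * (f m * (eNaux N (i:ℤ) m * eNaux N (-(j:ℤ)) m)) * v j := by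
          ring
      _ = (starRingEnd ℂ) (u i) * (f m * eNaux N ((i:ℤ)-(j:ℤ)) m) * v j := by rw [he]
  have expandL : star u ⬝ᵥ T.mulVec v = ∑ i : Fin R, ∑ j : Fin R, ∑ m : Fin N,
      (1/((N:ℕ):ℂ)) * ((starRingEnd ℂ) (u i) * (f m * eNaux N ((i:ℤ)-(j:ℤ)) m) * v j) := by
    rw [dotProduct]
    refine Finset.sum_congr rfl fun i _ => ?_
    rw [Matrix.mulVec, dotProduct, Pi.star_apply, Finset.mul_sum]
    refine Finset.sum_congr rfl fun j _ => ?_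
    rw [hT i j, hTE i j, Finset.mul_sum, Finset.sum_mul, Finset.mul_sum]
    refine Finset.sum_congr rfl fun m _ => ?_
    simp only [Complex.star_def, hf]
    ring
  have expandR : (1/((N:ℕ):ℂ)) * ∑ m : Fin N, f m * (U m * V m)
      = ∑ m : Fin N, ∑ i : Fin R, ∑ j : Fin R,
        (1/((N:ℕ):ℂ)) * ((starRingEnd ℂ) (u i) * (f m * eNaux N ((i:ℤ)-(j:ℤ)) m) * v j) := by
    rw [Finset.mul_sum]
    refine Finset.sum_congr rfl fun m _ => ?_
    rw [hterm m, Finset.mul_sum]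
    refine Finset.sum_congr rfl fun i _ => ?_
    rw [Finset.mul_sum]
  have hId : star u ⬝ᵥ T.mulVec v = (1/((N:ℕ):ℂ)) * ∑ m : Fin N, f m * (U m * V m) := by
    rw [expandL, expandR]
    exact ((Finset.sum_comm).trans
      (Finset.sum_congr rfl fun _ _ => Finset.sum_comm)).symm
  rw [hId]
  have habs : ‖(1/((N:ℕ):ℂ)) * ∑ m : Fin N, f m * (U m * V m)‖
      ≤ (1/(N:ℝ)) * ∑ m : Fin N, S * (‖U m‖ * ‖V m‖) := by
    rw [norm_mul]
    have h1 : ‖1/((N:ℕ):ℂ)‖ = 1/(N:ℝ) := by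
      rw [norm_div, norm_one, Complex.norm_natCast]
    rw [h1]
    apply mul_le_mul_of_nonneg_left _ (by positivity)
    calc ‖∑ m : Fin N, f m * (U m * V m)‖
        ≤ ∑ m : Fin N, ‖f m * (U m * V m)‖ := norm_sum_le _ _
      _ ≤ ∑ m : Fin N, S * (‖U m‖ * ‖V m‖) := by
          refine Finset.sum_le_sum fun m _ => ?_
          rw [norm_mul, norm_mul]
          apply mul_le_mul_of_nonneg_right _ (by positivity)
          refine hfS _ ⟨by positivity, ?_⟩
          rw [div_le_one hNR]
          exact_mod_cast le_of_lt m.isLt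
  refine habs.trans ?_
  rw [← Finset.mul_sum]
  have hPU : ∑ m : Fin N, ‖U m‖ ^ 2 = N * ∑ i, ‖u i‖ ^ 2 := by
    have hp := parseval' N R hN (fun i => (starRingEnd ℂ) (u i)) (fun i => (i:ℤ))
      (fun i i' h => fin_eq_of_dvd' N R hRN i i' (by simpa using h))
    simp only [Complex.norm_conj] at hp
    rw [hU]
    exact hp
  have hPV : ∑ m : Fin N, ‖V m‖ ^ 2 = N * ∑ j, ‖v j‖ ^ 2 := by
    have hp := parseval' N R hN v (fun j => -(j:ℤ))
      (fun i i' h => (fin_eq_of_dvd' N R hRN i' i (by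
        have : -(i:ℤ) - -(i':ℤ) = (i':ℤ) - (i:ℤ) := by ring
        simpa [this] using h)).symm)
    rw [hV]
    exact hp
  have hCS : ∑ m : Fin N, ‖U m‖ * ‖V m‖
      ≤ Real.sqrt ((N:ℝ) * ∑ i, ‖u i‖ ^ 2)
        * Real.sqrt ((N:ℝ) * ∑ j, ‖v j‖ ^ 2) := by
    have := Real.sum_mul_le_sqrt_mul_sqrt Finset.univ
      (fun m : Fin N => ‖U m‖) (fun m : Fin N => ‖V m‖)
    rwa [hPU, hPV] at this
  calc (1/(N:ℝ)) * (S * ∑ m : Fin N, ‖U m‖ * ‖V m‖)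
      ≤ (1/(N:ℝ)) * (S * (Real.sqrt ((N:ℝ) * ∑ i, ‖u i‖ ^ 2)
          * Real.sqrt ((N:ℝ) * ∑ j, ‖v j‖ ^ 2))) := by
        apply mul_le_mul_of_nonneg_left _ (by positivity)
        exact mul_le_mul_of_nonneg_left hCS hS0
    _ = S * vNorm u * vNorm v := by
        rw [Real.sqrt_mul (le_of_lt hNR), Real.sqrt_mul (le_of_lt hNR), vNorm, vNorm]
        have hss : Real.sqrt (N:ℝ) * Real.sqrt (N:ℝ) = (N:ℝ) :=
          Real.mul_self_sqrt (le_of_lt hNR)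
        have h2 : (1:ℝ)/(N:ℝ) * (S * (Real.sqrt (N:ℝ)
              * Real.sqrt (∑ i, ‖u i‖ ^ 2)
            * (Real.sqrt (N:ℝ) * Real.sqrt (∑ j, ‖v j‖ ^ 2))))
            = ((Real.sqrt (N:ℝ) * Real.sqrt (N:ℝ))/(N:ℝ))
              * (S * (Real.sqrt (∑ i, ‖u i‖ ^ 2)
                * Real.sqrt (∑ j, ‖v j‖ ^ 2))) := by ring
        rw [h2, hss, div_self hNR.ne', one_mul]
        ring

private lemma iSup_Icc_le' {h : ℝ → ℝ} {C : ℝ} (hC : 0 ≤ C) (hh : ∀ ν, h ν ≤ C) :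
    (⨆ ν ∈ Set.Icc (0:ℝ) 1, h ν) ≤ C := by
  refine Real.iSup_le (fun ν => Real.iSup_le (fun _ => hh ν) hC) hC

private lemma le_iSup_Icc' {h : ℝ → ℝ} {C : ℝ} (hC : 0 ≤ C) (hh : ∀ ν, h ν ≤ C) {ν : ℝ}
    (hν : ν ∈ Set.Icc (0:ℝ) 1) : h ν ≤ ⨆ ν ∈ Set.Icc (0:ℝ) 1, h ν := by
  have hbdd : BddAbove (Set.range fun ν' => ⨆ _ : ν' ∈ Set.Icc (0:ℝ) 1, h ν') := by
    refine ⟨C, ?_⟩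
    rintro x ⟨ν', rfl⟩
    exact Real.iSup_le (fun _ => hh ν') hC
  have h1 : h ν = ⨆ _ : ν ∈ Set.Icc (0:ℝ) 1, h ν := by
    haveI : Nonempty (ν ∈ Set.Icc (0:ℝ) 1) := ⟨hν⟩
    rw [ciSup_const]
  rw [h1]
  exact le_ciSup hbdd ν

private lemma vNorm_aVec' (K : ℕ) (hK : 0 < K) (ν : ℝ) : vNorm (aVec K ν) = 1 := by
  have habs : ∀ k : Fin K, ‖aVec K ν k‖ ^ 2 = 1 / K := by
    intro k
    rw [aVec]
    rw [norm_mul, Complex.norm_exp]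
    have hre : (2 * (Real.pi:ℂ) * Complex.I * (ν:ℂ) * (k:ℂ)).re = 0 := by
      simp [Complex.mul_re, Complex.mul_im]
    rw [hre, Real.exp_zero, mul_one, Complex.norm_real, Real.norm_of_nonneg (by positivity)]
    rw [div_pow, one_pow, Real.sq_sqrt (Nat.cast_nonneg K)]
  rw [vNorm]
  simp only [habs]
  rw [Finset.sum_const, Finset.card_univ, Fintype.card_fin, nsmul_eq_mul,
    mul_one_div, div_self (by positivity : (K:ℝ) ≠ 0), Real.sqrt_one]

private def embV (P K : ℕ) (p : Fin P) (a : Fin K → ℂ) : Fin P × Fin K → ℂ :=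
  fun q => if q.1 = p then a q.2 else 0

private lemma vNorm_embV (P K : ℕ) (p : Fin P) (a : Fin K → ℂ) :
    vNorm (embV P K p a) = vNorm a := by
  rw [vNorm, vNorm]
  congr 1
  rw [Fintype.sum_prod_type]
  rw [Finset.sum_eq_single p]
  · simp [embV]
  · intro q _ hq
    simp [embV, hq]
  · intro h; exact absurd (Finset.mem_univ p) h

private lemma embV_quad (P K : ℕ) (A : Matrix (Fin P × Fin K) (Fin P × Fin K) ℂ) (p : Fin P)
    (a : Fin K → ℂ) :
    star (embV P K p a) ⬝ᵥ A.mulVec (embV P K p a)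
      = ∑ i : Fin K, ∑ j : Fin K, (starRingEnd ℂ) (a i) * A (p, i) (p, j) * a j := by
  rw [dotProduct, Fintype.sum_prod_type]
  rw [Finset.sum_eq_single p]
  · refine Finset.sum_congr rfl fun i _ => ?_
    rw [Pi.star_apply]
    have h1 : star (embV P K p a (p, i)) = (starRingEnd ℂ) (a i) := by
      simp [embV, Complex.star_def]
    rw [h1, Matrix.mulVec, dotProduct, Fintype.sum_prod_type, Finset.sum_eq_single p]
    · rw [Finset.mul_sum]
      refine Finset.sum_congr rfl fun j _ => ?_
      have h2 : embV P K p a (p, j) = a j := by simp [embV]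
      rw [h2, mul_assoc]
    · intro q _ hq
      simp [embV, hq]
    · intro h; exact absurd (Finset.mem_univ p) h
  · intro q _ hq
    apply Finset.sum_eq_zero
    intro i _
    simp [embV, hq]
  · intro h; exact absurd (Finset.mem_univ p) h

private lemma hat_quad' (P K : ℕ) (A : Matrix (Fin P × Fin K) (Fin P × Fin K) ℂ)
    (a : Fin K → ℂ) :
    star a ⬝ᵥ (hatBlock P K A).mulVec a
      = (1/(P:ℂ)) * ∑ p : Fin P, star (embV P K p a) ⬝ᵥ A.mulVec (embV P K p a) := by
  simp only [embV_quad]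
  calc star a ⬝ᵥ (hatBlock P K A).mulVec a
      = ∑ i : Fin K, ∑ j : Fin K, ∑ p : Fin P,
          (1/(P:ℂ)) * ((starRingEnd ℂ) (a i) * A (p, i) (p, j) * a j) := by
        rw [dotProduct]
        refine Finset.sum_congr rfl fun i _ => ?_
        rw [Pi.star_apply, Matrix.mulVec, dotProduct, Finset.mul_sum]
        refine Finset.sum_congr rfl fun j _ => ?_
        have hb : hatBlock P K A i j = (1/(P:ℂ)) * ∑ p : Fin P, A (p, i) (p, j) := rfl
        rw [hb, Complex.star_def, Finset.mul_sum, Finset.sum_mul, Finset.mul_sum]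
        refine Finset.sum_congr rfl fun p _ => ?_
        ring
    _ = ∑ p : Fin P, ∑ i : Fin K, ∑ j : Fin K,
          (1/(P:ℂ)) * ((starRingEnd ℂ) (a i) * A (p, i) (p, j) * a j) :=
        ((Finset.sum_comm).trans
          (Finset.sum_congr rfl fun _ _ => Finset.sum_comm)).symm
    _ = (1/(P:ℂ)) * ∑ p : Fin P, ∑ i : Fin K, ∑ j : Fin K,
          (starRingEnd ℂ) (a i) * A (p, i) (p, j) * a j := by
        rw [Finset.mul_sum]
        refine Finset.sum_congr rfl fun p _ => ?_
        rw [Finset.mul_sum]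
        refine Finset.sum_congr rfl fun i _ => ?_
        rw [Finset.mul_sum]

private lemma tauP_eq' (P K : ℕ) (A : Matrix (Fin P × Fin K) (Fin P × Fin K) ℂ) (k : ℤ) :
    tauP P K A k = tau1 K (hatBlock P K A) k := by
  rw [tauP, tau1]
  have hsw : ∑ p : Fin P, ∑ i : Fin K, ∑ j : Fin K,
      (if (i : ℤ) - (j : ℤ) = k then A (p, i) (p, j) else 0)
      = ∑ i : Fin K, ∑ j : Fin K, ∑ p : Fin P,
      (if (i : ℤ) - (j : ℤ) = k then A (p, i) (p, j) else 0) :=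
    (Finset.sum_comm).trans (Finset.sum_congr rfl fun _ _ => Finset.sum_comm)
  rw [hsw, Finset.mul_sum, Finset.mul_sum]
  refine Finset.sum_congr rfl fun i _ => ?_
  rw [Finset.mul_sum, Finset.mul_sum]
  refine Finset.sum_congr rfl fun j _ => ?_
  have hb : hatBlock P K A i j = (1/(P:ℂ)) * ∑ p : Fin P, A (p, i) (p, j) := rfl
  rw [hb]
  by_cases hc : (i : ℤ) - (j : ℤ) = k
  · rw [if_pos hc]
    simp only [if_pos hc]
    rw [Finset.mul_sum]
    field_simp
    ring_nf
    rw [Finset.mul_sum]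
    exact Finset.sum_congr rfl fun p _ => by ring
  · simp only [if_neg hc]
    simp

private lemma tau1_big' (K : ℕ) (M : Matrix (Fin K) (Fin K) ℂ) (k : ℤ) (hk : (K:ℤ) ≤ |k|) :
    tau1 K M k = 0 := by
  rw [tau1]
  have : ∑ i : Fin K, ∑ j : Fin K,
      (if (i : ℤ) - (j : ℤ) = k then M i j else 0) = 0 := by
    refine Finset.sum_eq_zero fun i _ => Finset.sum_eq_zero fun j _ => ?_
    have hi := i.isLt
    have hj := j.isLt
    rw [if_neg]
    intro h
    rcases abs_cases k with ⟨ha, _⟩ | ⟨ha, _⟩ <;> omega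
  rw [this, mul_zero]

private lemma TmatP_entry' (P K R : ℕ) (A : Matrix (Fin P × Fin K) (Fin P × Fin K) ℂ)
    (i j : Fin R) :
    TmatP P K R K A i j = tau1 K (hatBlock P K A) ((i:ℤ) - (j:ℤ)) := by
  rw [TmatP]
  by_cases hc : |(i : ℤ) - (j : ℤ)| ≤ (K : ℤ) - 1
  · show (if |(i : ℤ) - (j : ℤ)| ≤ (K : ℤ) - 1 then tauP P K A ((i:ℤ)-(j:ℤ)) else 0) = _
    rw [if_pos hc, tauP_eq']
  · show (if |(i : ℤ) - (j : ℤ)| ≤ (K : ℤ) - 1 then tauP P K A ((i:ℤ)-(j:ℤ)) else 0) = _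
    rw [if_neg hc, tau1_big' K _ _ (by omega)]

private lemma Tmat1_entry' (K R : ℕ) (A : Matrix (Fin K) (Fin K) ℂ) (i j : Fin R) :
    Tmat1 K R R A i j = tau1 K A ((i:ℤ) - (j:ℤ)) := by
  rw [Tmat1]
  show (if |(i : ℤ) - (j : ℤ)| ≤ (R : ℤ) - 1 then tau1 K A ((i:ℤ)-(j:ℤ)) else 0) = _
  rw [if_pos]
  have hi := i.isLt
  have hj := j.isLt
  rcases abs_cases ((i:ℤ) - (j:ℤ)) with ⟨ha, _⟩ | ⟨ha, _⟩ <;> omega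


/-- Contraction properties of the Toeplitzification operators
(Proposition 2.1 of the paper). -/
theorem statement3 :
    (∀ (P K R : ℕ) (A : Matrix (Fin P × Fin K) (Fin P × Fin K) ℂ),
      0 < P → 0 < K → K ≤ R →
      ‖TmatP P K R K A‖ ≤
        (⨆ ν ∈ Set.Icc (0:ℝ) 1,
          ‖star (aVec K ν) ⬝ᵥ (hatBlock P K A).mulVec (aVec K ν)‖) ∧
      (⨆ ν ∈ Set.Icc (0:ℝ) 1,
          ‖star (aVec K ν) ⬝ᵥ (hatBlock P K A).mulVec (aVec K ν)‖) ≤ ‖A‖) ∧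
    (∀ (K R : ℕ) (A : Matrix (Fin K) (Fin K) ℂ),
      0 < K → 0 < R → R ≤ K →
      ‖Tmat1 K R R A‖ ≤
        (⨆ ν ∈ Set.Icc (0:ℝ) 1,
          ‖star (aVec K ν) ⬝ᵥ A.mulVec (aVec K ν)‖) ∧
      (⨆ ν ∈ Set.Icc (0:ℝ) 1,
          ‖star (aVec K ν) ⬝ᵥ A.mulVec (aVec K ν)‖) ≤ ‖A‖) := by
  constructor
  · intro P K R A hP hK hKR
    have hnn : (0:ℝ) ≤ ‖A‖ := norm_nonneg A
    have hb : ∀ ν : ℝ,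
        ‖star (aVec K ν) ⬝ᵥ (hatBlock P K A).mulVec (aVec K ν)‖ ≤ ‖A‖ := by
      intro ν
      rw [hat_quad']
      rw [norm_mul]
      have h1 : ‖1/(P:ℂ)‖ = 1/(P:ℝ) := by
        rw [norm_div, norm_one, Complex.norm_natCast]
      rw [h1]
      have hPR : (0:ℝ) < (P:ℝ) := by exact_mod_cast hP
      calc (1/(P:ℝ)) * ‖∑ p : Fin P,
            star (embV P K p (aVec K ν)) ⬝ᵥ A.mulVec (embV P K p (aVec K ν))‖
          ≤ (1/(P:ℝ)) * ∑ p : Fin P, ‖star (embV P K p (aVec K ν)) ⬝ᵥ A.mulVec (embV P K p (aVec K ν))‖ := by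
            apply mul_le_mul_of_nonneg_left _ (by positivity)
            exact norm_sum_le _ _
        _ ≤ (1/(P:ℝ)) * ∑ p : Fin P, ‖A‖ := by
            apply mul_le_mul_of_nonneg_left _ (by positivity)
            refine Finset.sum_le_sum fun p _ => ?_
            have := quadBound' A (embV P K p (aVec K ν)) (embV P K p (aVec K ν))
            rwa [vNorm_embV, vNorm_aVec' K hK, mul_one, mul_one] at this
        _ = ‖A‖ := by
            rw [Finset.sum_const, Finset.card_univ, Fintype.card_fin, nsmul_eq_mul]
            field_simp
    have hle : ∀ ν ∈ Set.Icc (0:ℝ) 1,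
        ‖star (aVec K ν) ⬝ᵥ (hatBlock P K A).mulVec (aVec K ν)‖
        ≤ ⨆ ν ∈ Set.Icc (0:ℝ) 1,
            ‖star (aVec K ν) ⬝ᵥ (hatBlock P K A).mulVec (aVec K ν)‖ :=
      fun ν hν => le_iSup_Icc' hnn hb hν
    have hS0 : (0:ℝ) ≤ ⨆ ν ∈ Set.Icc (0:ℝ) 1,
        ‖star (aVec K ν) ⬝ᵥ (hatBlock P K A).mulVec (aVec K ν)‖ :=
      le_trans (norm_nonneg _) (hle 0 ⟨le_refl 0, zero_le_one⟩)
    refine ⟨?_, iSup_Icc_le' hnn hb⟩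
    exact core' K R hK (lt_of_lt_of_le hK hKR) (hatBlock P K A) (TmatP P K R K A)
      (TmatP_entry' P K R A) _ hS0 hle
  · intro K R A hK hR hRK
    have hnn : (0:ℝ) ≤ ‖A‖ := norm_nonneg A
    have hb : ∀ ν : ℝ,
        ‖star (aVec K ν) ⬝ᵥ A.mulVec (aVec K ν)‖ ≤ ‖A‖ := by
      intro ν
      have := quadBound' A (aVec K ν) (aVec K ν)
      rwa [vNorm_aVec' K hK, mul_one, mul_one] at this
    have hle : ∀ ν ∈ Set.Icc (0:ℝ) 1,
        ‖star (aVec K ν) ⬝ᵥ A.mulVec (aVec K ν)‖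
        ≤ ⨆ ν ∈ Set.Icc (0:ℝ) 1,
            ‖star (aVec K ν) ⬝ᵥ A.mulVec (aVec K ν)‖ :=
      fun ν hν => le_iSup_Icc' hnn hb hν
    have hS0 : (0:ℝ) ≤ ⨆ ν ∈ Set.Icc (0:ℝ) 1,
        ‖star (aVec K ν) ⬝ᵥ A.mulVec (aVec K ν)‖ :=
      le_trans (norm_nonneg _) (hle 0 ⟨le_refl 0, zero_le_one⟩)
    refine ⟨?_, iSup_Icc_le' hnn hb⟩
    exact core' K R hK hR A (Tmat1 K R R A) (Tmat1_entry' K R A) _ hS0 hle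
end
end

section
/- If A is a K×K complex matrix and R ≥ K is an integer, then T_{R,K}(A) (T_{R,K}(A))* ≤ T_{R,K}(A A*) in the Loewner order. If A is a K×K complex matrix and R ≤ K, then T_{R,R}(A) (T_{R,R}(A))* ≤ T_{R,R}(A A*). -/
open MeasureTheory ProbabilityTheory Matrix Filter Topology Finset Kronecker
open scoped Matrix.Norms.L2Operator ComplexOrder

noncomputable section

namespace Statement5Aux

open Complex Finset

/-- The full (unbanded) Toeplitz-ification of `A`. -/
noncomputable def Mfull (K R : ℕ) (A : Matrix (Fin K) (Fin K) ℂ) :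
    Matrix (Fin R) (Fin R) ℂ :=
  Matrix.of fun i j => tau1 K A ((i : ℤ) - (j : ℤ))

noncomputable def zc (N : ℕ) : ℂ := Complex.exp (2 * Real.pi * Complex.I / N)

noncomputable def gf (K N : ℕ) (B : Matrix (Fin K) (Fin K) ℂ) (t : ℕ) : ℂ :=
  ∑ u : Fin K, ∑ v : Fin K, B u v * zc N ^ ((t : ℤ) * ((v : ℤ) - (u : ℤ)))

noncomputable def cf (N R : ℕ) (x : Fin R → ℂ) (t : ℕ) : ℂ :=
  ∑ j : Fin R, x j * zc N ^ (-((t : ℤ) * (j : ℤ)))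

lemma zc_pow_N {N : ℕ} (hN : 0 < N) : zc N ^ N = 1 :=
  (Complex.isPrimitiveRoot_exp N hN.ne').pow_eq_one

lemma zc_ne_zero (N : ℕ) : zc N ≠ 0 := Complex.exp_ne_zero _

lemma zc_abs (N : ℕ) : ‖zc N‖ = 1 := by
  have h : (2 * (Real.pi : ℂ) * Complex.I / (N : ℂ)) =
      ((2 * Real.pi / N : ℝ) : ℂ) * Complex.I := by push_cast; ring
  rw [zc, h, Complex.norm_exp_ofReal_mul_I]

lemma zc_conj_zpow (N : ℕ) (m : ℤ) :
    (starRingEnd ℂ) (zc N ^ m) = zc N ^ (-m) := by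
  rw [map_zpow₀, ← Complex.inv_eq_conj (by rw [zc_abs]),
    _root_.inv_zpow, ← _root_.zpow_neg]

lemma zc_abs_zpow (N : ℕ) (m : ℤ) : ‖zc N ^ m‖ = 1 := by
  rw [norm_zpow, zc_abs, _root_.one_zpow]

lemma zc_orth {N : ℕ} (hN : 0 < N) (s : ℤ) (hs : |s| < (N : ℤ)) :
    ∑ t ∈ Finset.range N, zc N ^ ((t : ℤ) * s) = if s = 0 then (N : ℂ) else 0 := by
  by_cases h0 : s = 0
  · simp [h0]
  · rw [if_neg h0]
    have hnd : ¬ ((N : ℤ) ∣ s) := by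
      rintro ⟨c, rfl⟩
      have hc0 : c ≠ 0 := by rintro rfl; simp at h0
      have h1 : 1 ≤ |c| := Int.one_le_abs hc0
      rw [abs_mul, abs_of_nonneg (by positivity : (0:ℤ) ≤ (N:ℤ))] at hs
      nlinarith
    have hne1 : zc N ^ s ≠ 1 := fun h =>
      hnd (((Complex.isPrimitiveRoot_exp N hN.ne').zpow_eq_one_iff_dvd s).mp h)
    have hpow : (zc N ^ s) ^ N = 1 := by
      rw [← zpow_natCast (zc N ^ s), ← _root_.zpow_mul, mul_comm, _root_.zpow_mul, zpow_natCast,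
        zc_pow_N hN, _root_.one_zpow]
    calc ∑ t ∈ Finset.range N, zc N ^ ((t : ℤ) * s)
        = ∑ t ∈ Finset.range N, (zc N ^ s) ^ t := by
          refine Finset.sum_congr rfl fun t _ => ?_
          rw [mul_comm, _root_.zpow_mul, zpow_natCast]
      _ = ((zc N ^ s) ^ N - 1) / (zc N ^ s - 1) := geom_sum_eq hne1 N
      _ = 0 := by rw [hpow]; simp

lemma Mfull_entry {K R : ℕ} (hK : 0 < K) (B : Matrix (Fin K) (Fin K) ℂ) (i j : Fin R) :
    Mfull K R B i j = (1 / ((K : ℂ) * ((K + R : ℕ) : ℂ))) *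
      ∑ t ∈ Finset.range (K + R),
        gf K (K + R) B t * zc (K + R) ^ ((t : ℤ) * ((i : ℤ) - (j : ℤ))) := by
  have hN : 0 < K + R := by omega
  have hζ0 := zc_ne_zero (K + R)
  have step1 : ∀ t ∈ Finset.range (K + R),
      gf K (K + R) B t * zc (K + R) ^ ((t : ℤ) * ((i : ℤ) - (j : ℤ))) =
      ∑ u : Fin K, ∑ v : Fin K,
        B u v * zc (K + R) ^ ((t : ℤ) * (((v : ℤ) - (u : ℤ)) + ((i : ℤ) - (j : ℤ)))) := by
    intro t _
    rw [gf, Finset.sum_mul]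
    refine Finset.sum_congr rfl fun u _ => ?_
    rw [Finset.sum_mul]
    refine Finset.sum_congr rfl fun v _ => ?_
    rw [mul_assoc, ← zpow_add₀ hζ0, ← mul_add]
  rw [Finset.sum_congr rfl step1, Finset.sum_comm,
    Finset.sum_congr rfl (fun (u : Fin K) _ => Finset.sum_comm)]
  have step2 : ∀ u : Fin K, ∀ v : Fin K,
      (∑ t ∈ Finset.range (K + R),
        B u v * zc (K + R) ^ ((t : ℤ) * (((v : ℤ) - (u : ℤ)) + ((i : ℤ) - (j : ℤ))))) =
      ((K + R : ℕ) : ℂ) *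
        (if (u : ℤ) - (v : ℤ) = (i : ℤ) - (j : ℤ) then B u v else 0) := by
    intro u v
    rw [← Finset.mul_sum, zc_orth hN _ (by
      rw [abs_lt]
      have := u.isLt; have := v.isLt; have := i.isLt; have := j.isLt
      omega)]
    by_cases h : (u : ℤ) - (v : ℤ) = (i : ℤ) - (j : ℤ)
    · rw [if_pos h, if_pos (by omega)]; ring
    · rw [if_neg h, if_neg (by omega)]; ring
  rw [Finset.sum_congr rfl (fun (u : Fin K) _ =>
    Finset.sum_congr rfl (fun (v : Fin K) _ => step2 u v))]
  simp only [Mfull, Matrix.of_apply, tau1, ← Finset.mul_sum]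
  have hNc : (((K + R : ℕ)) : ℂ) ≠ 0 := Nat.cast_ne_zero.mpr hN.ne'
  have hKc : ((K : ℕ) : ℂ) ≠ 0 := Nat.cast_ne_zero.mpr hK.ne'
  field_simp

lemma Mfull_quad {K R : ℕ} (hK : 0 < K) (B : Matrix (Fin K) (Fin K) ℂ) (x : Fin R → ℂ) :
    dotProduct (star x) (Mfull K R B *ᵥ x) =
      (1 / ((K : ℂ) * ((K + R : ℕ) : ℂ))) * ∑ t ∈ Finset.range (K + R),
        gf K (K + R) B t * ((starRingEnd ℂ) (cf (K + R) R x t) * cf (K + R) R x t) := by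
  have hζ0 := zc_ne_zero (K + R)
  have hsplit : ∀ (t : ℕ) (i j : Fin R),
      zc (K + R) ^ ((t:ℤ) * ((i:ℤ) - (j:ℤ))) =
        zc (K + R) ^ ((t:ℤ) * (i:ℤ)) * zc (K + R) ^ (-((t:ℤ) * (j:ℤ))) := by
    intro t i j
    rw [← zpow_add₀ hζ0]
    congr 1
    ring
  have hcconj : ∀ t : ℕ, (starRingEnd ℂ) (cf (K + R) R x t) =
      ∑ i : Fin R, (starRingEnd ℂ) (x i) * zc (K + R) ^ ((t:ℤ) * (i:ℤ)) := by
    intro t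
    rw [cf, _root_.map_sum]
    exact Finset.sum_congr rfl fun i _ => by rw [_root_.map_mul, zc_conj_zpow, neg_neg]
  have hcf : ∀ t, cf (K + R) R x t = ∑ j : Fin R, x j * zc (K + R) ^ (-((t:ℤ) * (j:ℤ))) :=
    fun t => rfl
  calc dotProduct (star x) (Mfull K R B *ᵥ x)
      = ∑ i : Fin R, ∑ j : Fin R, ∑ t ∈ Finset.range (K + R),
          (1 / ((K : ℂ) * ((K + R : ℕ) : ℂ))) * (gf K (K + R) B t *
            (((starRingEnd ℂ) (x i) * zc (K + R) ^ ((t:ℤ) * (i:ℤ))) *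
             (x j * zc (K + R) ^ (-((t:ℤ) * (j:ℤ)))))) := by
        rw [dotProduct]
        refine Finset.sum_congr rfl fun i _ => ?_
        rw [Matrix.mulVec, dotProduct, Finset.mul_sum]
        refine Finset.sum_congr rfl fun j _ => ?_
        rw [Mfull_entry hK B i j, Pi.star_apply, Finset.mul_sum, Finset.sum_mul,
          Finset.mul_sum]
        refine Finset.sum_congr rfl fun t _ => ?_
        rw [hsplit t i j, Complex.star_def]
        ring
    _ = ∑ i : Fin R, ∑ t ∈ Finset.range (K + R), ∑ j : Fin R,
          (1 / ((K : ℂ) * ((K + R : ℕ) : ℂ))) * (gf K (K + R) B t *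
            (((starRingEnd ℂ) (x i) * zc (K + R) ^ ((t:ℤ) * (i:ℤ))) *
             (x j * zc (K + R) ^ (-((t:ℤ) * (j:ℤ)))))) :=
        Finset.sum_congr rfl fun i _ => Finset.sum_comm
    _ = ∑ t ∈ Finset.range (K + R), ∑ i : Fin R, ∑ j : Fin R,
          (1 / ((K : ℂ) * ((K + R : ℕ) : ℂ))) * (gf K (K + R) B t *
            (((starRingEnd ℂ) (x i) * zc (K + R) ^ ((t:ℤ) * (i:ℤ))) *
             (x j * zc (K + R) ^ (-((t:ℤ) * (j:ℤ)))))) := Finset.sum_comm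
    _ = (1 / ((K : ℂ) * ((K + R : ℕ) : ℂ))) * ∑ t ∈ Finset.range (K + R),
          gf K (K + R) B t * ((starRingEnd ℂ) (cf (K + R) R x t) * cf (K + R) R x t) := by
        rw [Finset.mul_sum]
        refine Finset.sum_congr rfl fun t _ => Eq.symm ?_
        rw [hcconj, hcf, Finset.sum_mul_sum, Finset.mul_sum, Finset.mul_sum]
        refine Finset.sum_congr rfl fun i _ => ?_
        rw [Finset.mul_sum, Finset.mul_sum]

lemma Mfull_yform {K R : ℕ} (hK : 0 < K) (A : Matrix (Fin K) (Fin K) ℂ)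
    (x : Fin R → ℂ) (i : Fin R) :
    ((Mfull K R A)ᴴ *ᵥ x) i = (1 / ((K : ℂ) * ((K + R : ℕ) : ℂ))) *
      ∑ t ∈ Finset.range (K + R),
        (starRingEnd ℂ) (gf K (K + R) A t) * cf (K + R) R x t *
          zc (K + R) ^ ((t:ℤ) * (i:ℤ)) := by
  have hζ0 := zc_ne_zero (K + R)
  have hsplit : ∀ (t : ℕ) (j : Fin R),
      zc (K + R) ^ (-((t:ℤ) * ((j:ℤ) - (i:ℤ)))) =
        zc (K + R) ^ ((t:ℤ) * (i:ℤ)) * zc (K + R) ^ (-((t:ℤ) * (j:ℤ))) := by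
    intro t j
    rw [← zpow_add₀ hζ0]
    congr 1
    ring
  have hcf : ∀ t, cf (K + R) R x t = ∑ j : Fin R, x j * zc (K + R) ^ (-((t:ℤ) * (j:ℤ))) :=
    fun t => rfl
  calc ((Mfull K R A)ᴴ *ᵥ x) i
      = ∑ j : Fin R, ∑ t ∈ Finset.range (K + R),
          (1 / ((K : ℂ) * ((K + R : ℕ) : ℂ))) * ((starRingEnd ℂ) (gf K (K + R) A t) *
            (x j * zc (K + R) ^ (-((t:ℤ) * (j:ℤ)))) * zc (K + R) ^ ((t:ℤ) * (i:ℤ))) := by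
        rw [Matrix.mulVec, dotProduct]
        refine Finset.sum_congr rfl fun j _ => ?_
        have hcst : (starRingEnd ℂ) (1 / ((K : ℂ) * ((K + R : ℕ) : ℂ))) =
            1 / ((K : ℂ) * ((K + R : ℕ) : ℂ)) := by
          simp [map_div₀]
        rw [Matrix.conjTranspose_apply, Mfull_entry hK A j i, Complex.star_def,
          _root_.map_mul, hcst, _root_.map_sum, Finset.mul_sum, Finset.sum_mul]
        refine Finset.sum_congr rfl fun t _ => ?_
        rw [_root_.map_mul, zc_conj_zpow, hsplit t j]
        ring
    _ = ∑ t ∈ Finset.range (K + R), ∑ j : Fin R,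
          (1 / ((K : ℂ) * ((K + R : ℕ) : ℂ))) * ((starRingEnd ℂ) (gf K (K + R) A t) *
            (x j * zc (K + R) ^ (-((t:ℤ) * (j:ℤ)))) * zc (K + R) ^ ((t:ℤ) * (i:ℤ))) :=
        Finset.sum_comm
    _ = (1 / ((K : ℂ) * ((K + R : ℕ) : ℂ))) * ∑ t ∈ Finset.range (K + R),
          (starRingEnd ℂ) (gf K (K + R) A t) * cf (K + R) R x t *
            zc (K + R) ^ ((t:ℤ) * (i:ℤ)) := by
        rw [Finset.mul_sum]
        refine Finset.sum_congr rfl fun t _ => Eq.symm ?_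
        rw [hcf, Finset.mul_sum, Finset.sum_mul, Finset.mul_sum]

lemma parseval {R N : ℕ} (hRN : R ≤ N) (hN : 0 < N) (y : Fin R → ℂ) :
    ∑ t ∈ Finset.range N, (starRingEnd ℂ) (cf N R y t) * cf N R y t =
      (N : ℂ) * ∑ i : Fin R, (starRingEnd ℂ) (y i) * y i := by
  have hζ0 := zc_ne_zero N
  have hsplit : ∀ (t : ℕ) (i j : Fin R),
      zc N ^ ((t:ℤ) * (i:ℤ)) * zc N ^ (-((t:ℤ) * (j:ℤ))) =
        zc N ^ ((t:ℤ) * ((i:ℤ) - (j:ℤ))) := by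
    intro t i j
    rw [← zpow_add₀ hζ0]
    congr 1
    ring
  have hcconj : ∀ t : ℕ, (starRingEnd ℂ) (cf N R y t) =
      ∑ i : Fin R, (starRingEnd ℂ) (y i) * zc N ^ ((t:ℤ) * (i:ℤ)) := by
    intro t
    rw [cf, _root_.map_sum]
    exact Finset.sum_congr rfl fun i _ => by rw [_root_.map_mul, zc_conj_zpow, neg_neg]
  have hcf : ∀ t, cf N R y t = ∑ j : Fin R, y j * zc N ^ (-((t:ℤ) * (j:ℤ))) :=
    fun t => rfl
  calc ∑ t ∈ Finset.range N, (starRingEnd ℂ) (cf N R y t) * cf N R y t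
      = ∑ t ∈ Finset.range N, ∑ i : Fin R, ∑ j : Fin R,
          ((starRingEnd ℂ) (y i) * y j) * zc N ^ ((t:ℤ) * ((i:ℤ) - (j:ℤ))) := by
        refine Finset.sum_congr rfl fun t _ => ?_
        rw [hcconj, hcf, Finset.sum_mul_sum]
        refine Finset.sum_congr rfl fun i _ => Finset.sum_congr rfl fun j _ => ?_
        rw [← hsplit t i j]
        ring
    _ = ∑ i : Fin R, ∑ t ∈ Finset.range N, ∑ j : Fin R,
          ((starRingEnd ℂ) (y i) * y j) * zc N ^ ((t:ℤ) * ((i:ℤ) - (j:ℤ))) :=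
        Finset.sum_comm
    _ = ∑ i : Fin R, ∑ j : Fin R, ∑ t ∈ Finset.range N,
          ((starRingEnd ℂ) (y i) * y j) * zc N ^ ((t:ℤ) * ((i:ℤ) - (j:ℤ))) :=
        Finset.sum_congr rfl fun i _ => Finset.sum_comm
    _ = ∑ i : Fin R, ∑ j : Fin R, ((starRingEnd ℂ) (y i) * y j) *
          (if (i:ℤ) - (j:ℤ) = 0 then (N : ℂ) else 0) := by
        refine Finset.sum_congr rfl fun i _ => Finset.sum_congr rfl fun j _ => ?_
        rw [← Finset.mul_sum, zc_orth hN _ (by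
          rw [abs_lt]
          have := i.isLt; have := j.isLt
          omega)]
    _ = (N : ℂ) * ∑ i : Fin R, (starRingEnd ℂ) (y i) * y i := by
        rw [Finset.mul_sum]
        refine Finset.sum_congr rfl fun i _ => ?_
        rw [Finset.sum_eq_single i]
        · rw [if_pos (by omega)]; ring
        · intro b _ hb
          rw [if_neg (fun h => hb (Fin.ext (by omega))), mul_zero]
        · intro h
          exact absurd (Finset.mem_univ i) h

lemma gf_eq_w {K N : ℕ} (A : Matrix (Fin K) (Fin K) ℂ) (t : ℕ) :
    gf K N A t = ∑ v : Fin K,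
      (∑ u : Fin K, A u v * zc N ^ (-((t:ℤ) * (u:ℤ)))) * zc N ^ ((t:ℤ) * (v:ℤ)) := by
  have hζ0 := zc_ne_zero N
  have hsplit : ∀ (u v : Fin K),
      zc N ^ ((t:ℤ) * ((v:ℤ) - (u:ℤ))) =
        zc N ^ (-((t:ℤ) * (u:ℤ))) * zc N ^ ((t:ℤ) * (v:ℤ)) := by
    intro u v
    rw [← zpow_add₀ hζ0]
    congr 1
    ring
  rw [gf, Finset.sum_comm]
  refine Finset.sum_congr rfl fun v _ => ?_
  rw [Finset.sum_mul]
  refine Finset.sum_congr rfl fun u _ => ?_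
  rw [hsplit u v]
  ring

lemma gf_self {K N : ℕ} (A : Matrix (Fin K) (Fin K) ℂ) (t : ℕ) :
    gf K N (A * Aᴴ) t =
      (((∑ v : Fin K, Complex.normSq (∑ u : Fin K, A u v * zc N ^ (-((t:ℤ) * (u:ℤ))))) : ℝ) : ℂ) := by
  have hζ0 := zc_ne_zero N
  have hsplit : ∀ (u v : Fin K),
      zc N ^ ((t:ℤ) * ((v:ℤ) - (u:ℤ))) =
        zc N ^ (-((t:ℤ) * (u:ℤ))) * zc N ^ ((t:ℤ) * (v:ℤ)) := by
    intro u v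
    rw [← zpow_add₀ hζ0]
    congr 1
    ring
  have hwconj : ∀ k : Fin K,
      (starRingEnd ℂ) (∑ u : Fin K, A u k * zc N ^ (-((t:ℤ) * (u:ℤ)))) =
        ∑ v : Fin K, (starRingEnd ℂ) (A v k) * zc N ^ ((t:ℤ) * (v:ℤ)) := by
    intro k
    rw [_root_.map_sum]
    exact Finset.sum_congr rfl fun v _ => by rw [_root_.map_mul, zc_conj_zpow, neg_neg]
  calc gf K N (A * Aᴴ) t
      = ∑ u : Fin K, ∑ v : Fin K, ∑ k : Fin K,
          (A u k * zc N ^ (-((t:ℤ) * (u:ℤ)))) *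
            ((starRingEnd ℂ) (A v k) * zc N ^ ((t:ℤ) * (v:ℤ))) := by
        rw [gf]
        refine Finset.sum_congr rfl fun u _ => Finset.sum_congr rfl fun v _ => ?_
        rw [Matrix.mul_apply, Finset.sum_mul]
        refine Finset.sum_congr rfl fun k _ => ?_
        rw [Matrix.conjTranspose_apply, hsplit u v, Complex.star_def]
        ring
    _ = ∑ u : Fin K, ∑ k : Fin K, ∑ v : Fin K,
          (A u k * zc N ^ (-((t:ℤ) * (u:ℤ)))) *
            ((starRingEnd ℂ) (A v k) * zc N ^ ((t:ℤ) * (v:ℤ))) :=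
        Finset.sum_congr rfl fun u _ => Finset.sum_comm
    _ = ∑ k : Fin K, ∑ u : Fin K, ∑ v : Fin K,
          (A u k * zc N ^ (-((t:ℤ) * (u:ℤ)))) *
            ((starRingEnd ℂ) (A v k) * zc N ^ ((t:ℤ) * (v:ℤ))) :=
        Finset.sum_comm
    _ = ∑ k : Fin K, (∑ u : Fin K, A u k * zc N ^ (-((t:ℤ) * (u:ℤ)))) *
          (starRingEnd ℂ) (∑ u : Fin K, A u k * zc N ^ (-((t:ℤ) * (u:ℤ)))) := by
        refine Finset.sum_congr rfl fun k _ => ?_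
        rw [hwconj, Finset.sum_mul_sum]
    _ = _ := by
        push_cast
        exact Finset.sum_congr rfl fun k _ => Complex.mul_conj _

lemma gf_bound {K N : ℕ} (A : Matrix (Fin K) (Fin K) ℂ) (t : ℕ) :
    (‖gf K N A t‖)^2 ≤
      (K : ℝ) * ∑ v : Fin K, Complex.normSq (∑ u : Fin K, A u v * zc N ^ (-((t:ℤ) * (u:ℤ)))) := by
  have h1 : ‖gf K N A t‖ ≤
      ∑ v : Fin K, ‖∑ u : Fin K, A u v * zc N ^ (-((t:ℤ) * (u:ℤ)))‖ := by
    rw [gf_eq_w]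
    refine le_trans (norm_sum_le _ _) ?_
    refine Finset.sum_le_sum fun v _ => ?_
    rw [norm_mul, zc_abs_zpow, mul_one]
  have h2 : (∑ v : Fin K, ‖∑ u : Fin K, A u v * zc N ^ (-((t:ℤ) * (u:ℤ)))‖)^2 ≤
      (K : ℝ) * ∑ v : Fin K, Complex.normSq (∑ u : Fin K, A u v * zc N ^ (-((t:ℤ) * (u:ℤ)))) := by
    have := Finset.sum_mul_sq_le_sq_mul_sq Finset.univ (fun _ : Fin K => (1:ℝ))
      (fun v => ‖∑ u : Fin K, A u v * zc N ^ (-((t:ℤ) * (u:ℤ)))‖)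
    simp only [one_mul, one_pow] at this
    calc (∑ v : Fin K, ‖∑ u : Fin K, A u v * zc N ^ (-((t:ℤ) * (u:ℤ)))‖)^2
        ≤ (∑ _v : Fin K, (1:ℝ)) *
            ∑ v : Fin K, (‖∑ u : Fin K, A u v * zc N ^ (-((t:ℤ) * (u:ℤ)))‖)^2 :=
          this
      _ = (K : ℝ) * ∑ v : Fin K, Complex.normSq (∑ u : Fin K, A u v * zc N ^ (-((t:ℤ) * (u:ℤ)))) := by
          rw [Finset.sum_const, Finset.card_univ, Fintype.card_fin, nsmul_eq_mul, mul_one]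
          congr 1
          exact Finset.sum_congr rfl fun v _ => Complex.sq_norm _
  calc (‖gf K N A t‖)^2
      ≤ (∑ v : Fin K, ‖∑ u : Fin K, A u v * zc N ^ (-((t:ℤ) * (u:ℤ)))‖)^2 :=
        pow_le_pow_left₀ (norm_nonneg _) h1 2
    _ ≤ _ := h2

lemma Mfull_isHermitian (K R : ℕ) (B : Matrix (Fin K) (Fin K) ℂ) (hB : B.IsHermitian) :
    (Mfull K R B).IsHermitian := by
  have hBc : ∀ u v, (starRingEnd ℂ) (B u v) = B v u := fun u v => by
    have := congrFun (congrFun hB v) u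
    rw [Matrix.conjTranspose_apply] at this
    exact this
  show (Mfull K R B)ᴴ = Mfull K R B
  ext i j
  rw [Matrix.conjTranspose_apply]
  show star (tau1 K B ((j:ℤ) - (i:ℤ))) = tau1 K B ((i:ℤ) - (j:ℤ))
  rw [Complex.star_def, tau1, tau1, _root_.map_mul, _root_.map_sum]
  congr 1
  · simp [map_div₀]
  · rw [Finset.sum_comm]
    refine Finset.sum_congr rfl fun v _ => ?_
    rw [_root_.map_sum]
    refine Finset.sum_congr rfl fun u _ => ?_
    rw [apply_ite (starRingEnd ℂ), map_zero, hBc]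
    exact if_congr (by omega) rfl rfl

lemma conj_mul_self (z : ℂ) :
    (starRingEnd ℂ) z * z = ((Complex.normSq z : ℝ) : ℂ) := by
  rw [mul_comm]; exact Complex.mul_conj _

lemma core (K R : ℕ) (A : Matrix (Fin K) (Fin K) ℂ) :
    (Mfull K R (A * Aᴴ) - Mfull K R A * (Mfull K R A)ᴴ).PosSemidef := by
  rcases Nat.eq_zero_or_pos K with hK0 | hK
  · subst hK0
    have h1 : Mfull 0 R A = 0 := by ext i j; simp [Mfull, tau1]
    have h2 : Mfull 0 R (A * Aᴴ) = 0 := by ext i j; simp [Mfull, tau1]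
    rw [h2, h1]
    simpa using Matrix.PosSemidef.zero
  refine Matrix.PosSemidef.of_dotProduct_mulVec_nonneg ?_ ?_
  · exact ((Mfull_isHermitian K R _ (Matrix.isHermitian_mul_conjTranspose_self A)).sub
      (Matrix.isHermitian_mul_conjTranspose_self (Mfull K R A)))
  intro x
  have hN : 0 < K + R := by omega
  set y : Fin R → ℂ := (Mfull K R A)ᴴ *ᵥ x with hy
  set S : ℝ := ∑ i : Fin R, Complex.normSq (y i) with hS
  set T : ℝ := ∑ t ∈ Finset.range (K + R), (∑ v : Fin K,
    Complex.normSq (∑ u : Fin K, A u v * zc (K + R) ^ (-((t:ℤ) * (u:ℤ))))) *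
      Complex.normSq (cf (K + R) R x t) with hT
  have hKpos : (0:ℝ) < K := by exact_mod_cast hK
  have hNpos : (0:ℝ) < ((K + R : ℕ) : ℝ) := by exact_mod_cast hN
  have hS0 : 0 ≤ S := Finset.sum_nonneg fun i _ => Complex.normSq_nonneg _
  have hT0 : 0 ≤ T := Finset.sum_nonneg fun t _ =>
    mul_nonneg (Finset.sum_nonneg fun v _ => Complex.normSq_nonneg _) (Complex.normSq_nonneg _)
  -- the first quadratic form
  have hQ1 : dotProduct (star x) (Mfull K R (A * Aᴴ) *ᵥ x) =
      (((1/((K:ℝ) * ((K + R : ℕ) : ℝ))) * T : ℝ) : ℂ) := by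
    rw [Mfull_quad hK (A * Aᴴ) x]
    rw [show (∑ t ∈ Finset.range (K + R), gf K (K + R) (A * Aᴴ) t *
        ((starRingEnd ℂ) (cf (K + R) R x t) * cf (K + R) R x t)) = ((T : ℝ) : ℂ) by
      rw [hT]
      push_cast
      refine Finset.sum_congr rfl fun t _ => ?_
      rw [gf_self, conj_mul_self]
      push_cast
      ring]
    push_cast
    ring
  -- the second quadratic form
  have hstar : star x ᵥ* Mfull K R A = star y := by
    rw [hy, Matrix.star_mulVec, Matrix.conjTranspose_conjTranspose]
  have hQ2 : dotProduct (star x) ((Mfull K R A * (Mfull K R A)ᴴ) *ᵥ x) =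
      ((S : ℝ) : ℂ) := by
    rw [← Matrix.mulVec_mulVec, dotProduct_mulVec, hstar, ← hy, hS]
    push_cast
    rw [dotProduct]
    refine Finset.sum_congr rfl fun i _ => ?_
    rw [Pi.star_apply]
    exact conj_mul_self (y i)
  -- Fourier formula for S
  have hSc : ((S : ℝ) : ℂ) = (1 / ((K : ℂ) * ((K + R : ℕ) : ℂ))) *
      ∑ t ∈ Finset.range (K + R), (starRingEnd ℂ) (gf K (K + R) A t) * cf (K + R) R x t *
        (starRingEnd ℂ) (cf (K + R) R y t) := by
    have hbconj : ∀ t : ℕ, (starRingEnd ℂ) (cf (K + R) R y t) =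
        ∑ i : Fin R, (starRingEnd ℂ) (y i) * zc (K + R) ^ ((t:ℤ) * (i:ℤ)) := by
      intro t
      rw [cf, _root_.map_sum]
      exact Finset.sum_congr rfl fun i _ => by rw [_root_.map_mul, zc_conj_zpow, neg_neg]
    calc ((S : ℝ) : ℂ)
        = ∑ i : Fin R, (starRingEnd ℂ) (y i) * y i := by
          rw [hS]
          push_cast
          exact Finset.sum_congr rfl fun i _ => by rw [conj_mul_self]
      _ = ∑ i : Fin R, ∑ t ∈ Finset.range (K + R), (1 / ((K : ℂ) * ((K + R : ℕ) : ℂ))) *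
            ((starRingEnd ℂ) (gf K (K + R) A t) * cf (K + R) R x t *
              ((starRingEnd ℂ) (y i) * zc (K + R) ^ ((t:ℤ) * (i:ℤ)))) := by
          refine Finset.sum_congr rfl fun i _ => ?_
          rw [show y i = ((Mfull K R A)ᴴ *ᵥ x) i from rfl, Mfull_yform hK A x i,
            Finset.mul_sum, Finset.mul_sum]
          refine Finset.sum_congr rfl fun t _ => by ring
      _ = ∑ t ∈ Finset.range (K + R), ∑ i : Fin R, (1 / ((K : ℂ) * ((K + R : ℕ) : ℂ))) *
            ((starRingEnd ℂ) (gf K (K + R) A t) * cf (K + R) R x t *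
              ((starRingEnd ℂ) (y i) * zc (K + R) ^ ((t:ℤ) * (i:ℤ)))) := Finset.sum_comm
      _ = (1 / ((K : ℂ) * ((K + R : ℕ) : ℂ))) *
            ∑ t ∈ Finset.range (K + R), (starRingEnd ℂ) (gf K (K + R) A t) * cf (K + R) R x t *
              (starRingEnd ℂ) (cf (K + R) R y t) := by
          rw [Finset.mul_sum]
          refine Finset.sum_congr rfl fun t _ => Eq.symm ?_
          rw [hbconj, Finset.mul_sum, Finset.mul_sum]
  -- Parseval for y
  have hpar : ∑ t ∈ Finset.range (K + R), Complex.normSq (cf (K + R) R y t) =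
      ((K + R : ℕ) : ℝ) * S := by
    have h2 : ((∑ t ∈ Finset.range (K + R), Complex.normSq (cf (K + R) R y t) : ℝ) : ℂ) =
        ((((K + R : ℕ) : ℝ) * S : ℝ) : ℂ) := by
      push_cast
      calc (∑ t ∈ Finset.range (K + R), ((Complex.normSq (cf (K + R) R y t) : ℝ) : ℂ))
          = ∑ t ∈ Finset.range (K + R), (starRingEnd ℂ) (cf (K + R) R y t) * cf (K + R) R y t :=
            Finset.sum_congr rfl fun t _ => (conj_mul_self _).symm
        _ = ((K + R : ℕ) : ℂ) * ∑ i : Fin R, (starRingEnd ℂ) (y i) * y i :=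
            parseval (show R ≤ K + R by omega) hN y
        _ = ((K + R : ℕ) : ℂ) * ∑ i : Fin R, ((Complex.normSq (y i) : ℝ) : ℂ) := by
            congr 1
            exact Finset.sum_congr rfl fun i _ => conj_mul_self _
        _ = _ := by rw [hS]; push_cast; ring
    exact_mod_cast h2
  -- triangle inequality bound
  have habsle : S ≤ (1/((K:ℝ) * ((K + R : ℕ) : ℝ))) * ∑ t ∈ Finset.range (K + R),
      ‖gf K (K + R) A t‖ * ‖cf (K + R) R x t‖ *
        ‖cf (K + R) R y t‖ := by
    have hSabs : S = ‖((S : ℝ) : ℂ)‖ := by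
      rw [Complex.norm_of_nonneg hS0]
    rw [hSabs, hSc, norm_mul]
    have hc0 : ‖1 / ((K : ℂ) * ((K + R : ℕ) : ℂ))‖ =
        1/((K:ℝ) * ((K + R : ℕ) : ℝ)) := by
      rw [norm_div, norm_one, norm_mul, Complex.norm_natCast, Complex.norm_natCast]
    rw [hc0]
    refine mul_le_mul_of_nonneg_left ?_ (by positivity)
    refine le_trans (norm_sum_le _ _) ?_
    refine Finset.sum_le_sum fun t _ => ?_
    rw [norm_mul, norm_mul, Complex.norm_conj, Complex.norm_conj]
  -- Cauchy-Schwarz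
  have hCS : (∑ t ∈ Finset.range (K + R),
      ‖gf K (K + R) A t‖ * ‖cf (K + R) R x t‖ *
        ‖cf (K + R) R y t‖)^2 ≤
      ((K:ℝ) * T) * (((K + R : ℕ) : ℝ) * S) := by
    have h := Finset.sum_mul_sq_le_sq_mul_sq (Finset.range (K + R))
      (fun t => ‖gf K (K + R) A t‖ * ‖cf (K + R) R x t‖)
      (fun t => ‖cf (K + R) R y t‖)
    refine le_trans h ?_
    have e1 : ∑ t ∈ Finset.range (K + R), (‖cf (K + R) R y t‖)^2 =
        ((K + R : ℕ) : ℝ) * S := by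
      rw [← hpar]
      exact Finset.sum_congr rfl fun t _ => Complex.sq_norm _
    rw [e1]
    refine mul_le_mul_of_nonneg_right ?_ (by positivity)
    rw [hT, Finset.mul_sum]
    refine Finset.sum_le_sum fun t _ => ?_
    rw [mul_pow]
    calc (‖gf K (K + R) A t‖)^2 * (‖cf (K + R) R x t‖)^2
        ≤ ((K : ℝ) * ∑ v : Fin K,
            Complex.normSq (∑ u : Fin K, A u v * zc (K + R) ^ (-((t:ℤ) * (u:ℤ))))) *
            (‖cf (K + R) R x t‖)^2 :=
          mul_le_mul_of_nonneg_right (gf_bound A t) (by positivity)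
      _ = (K : ℝ) * ((∑ v : Fin K,
            Complex.normSq (∑ u : Fin K, A u v * zc (K + R) ^ (-((t:ℤ) * (u:ℤ))))) *
            Complex.normSq (cf (K + R) R x t)) := by
          rw [Complex.sq_norm]
          ring
  -- conclude
  rw [Matrix.sub_mulVec, dotProduct_sub, hQ1, hQ2, ← Complex.ofReal_sub,
    Complex.zero_le_real, sub_nonneg]
  rcases eq_or_lt_of_le hS0 with hSz | hSpos
  · rw [← hSz]
    positivity
  · set Sig : ℝ := ∑ t ∈ Finset.range (K + R),
      ‖gf K (K + R) A t‖ * ‖cf (K + R) R x t‖ *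
        ‖cf (K + R) R y t‖ with hSig
    have h1 : (K:ℝ) * ((K + R : ℕ) : ℝ) * S ≤ Sig := by
      have h0 := mul_le_mul_of_nonneg_left habsle
        (le_of_lt (by positivity : (0:ℝ) < (K:ℝ) * ((K + R : ℕ) : ℝ)))
      calc (K:ℝ) * ((K + R : ℕ) : ℝ) * S
          ≤ (K:ℝ) * ((K + R : ℕ) : ℝ) * ((1/((K:ℝ) * ((K + R : ℕ) : ℝ))) * Sig) := h0
        _ = Sig := by field_simp
    have h3 : ((K:ℝ) * ((K + R : ℕ) : ℝ) * S)^2 ≤ ((K:ℝ) * T) * (((K + R : ℕ) : ℝ) * S) :=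
      le_trans (pow_le_pow_left₀ (by positivity) h1 2) hCS
    rw [show (1:ℝ)/((K:ℝ) * ((K + R : ℕ) : ℝ)) * T = T/((K:ℝ) * ((K + R : ℕ) : ℝ)) from
      by ring, le_div_iff₀ (by positivity)]
    nlinarith [h3, mul_pos (mul_pos hKpos hNpos) hSpos]

lemma tau1_eq_zero_of_large (K : ℕ) (A : Matrix (Fin K) (Fin K) ℂ) (k : ℤ)
    (hk : ¬ |k| ≤ (K:ℤ) - 1) : tau1 K A k = 0 := by
  rw [abs_le, not_and_or, not_le, not_le] at hk
  rw [tau1, mul_eq_zero]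
  right
  refine Finset.sum_eq_zero fun i _ => Finset.sum_eq_zero fun j _ => ?_
  rw [if_neg]
  have := i.isLt; have := j.isLt
  omega

lemma Tmat1_K (K R : ℕ) (A : Matrix (Fin K) (Fin K) ℂ) :
    Tmat1 K R K A = Mfull K R A := by
  ext i j
  show (if |(i : ℤ) - (j : ℤ)| ≤ (K : ℤ) - 1 then tau1 K A ((i : ℤ) - (j : ℤ)) else 0) =
    tau1 K A ((i : ℤ) - (j : ℤ))
  split_ifs with h
  · rfl
  · exact (tau1_eq_zero_of_large K A _ h).symm

lemma Tmat1_R (K R : ℕ) (A : Matrix (Fin K) (Fin K) ℂ) :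
    Tmat1 K R R A = Mfull K R A := by
  ext i j
  show (if |(i : ℤ) - (j : ℤ)| ≤ (R : ℤ) - 1 then tau1 K A ((i : ℤ) - (j : ℤ)) else 0) =
    tau1 K A ((i : ℤ) - (j : ℤ))
  rw [if_pos]
  rw [abs_le]
  have := i.isLt; have := j.isLt
  omega

end Statement5Aux

/-- `T_{R,K}(A) T_{R,K}(A)^* ≤ T_{R,K}(A A^*)` in the Loewner order
(Proposition 2.3 of the paper). -/
theorem statement5 :
    (∀ (K R : ℕ) (A : Matrix (Fin K) (Fin K) ℂ), K ≤ R →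
      (Tmat1 K R K (A * Aᴴ) - Tmat1 K R K A * (Tmat1 K R K A)ᴴ).PosSemidef) ∧
    (∀ (K R : ℕ) (A : Matrix (Fin K) (Fin K) ℂ), R ≤ K →
      (Tmat1 K R R (A * Aᴴ) - Tmat1 K R R A * (Tmat1 K R R A)ᴴ).PosSemidef) := by
  constructor
  · intro K R A _
    rw [Statement5Aux.Tmat1_K, Statement5Aux.Tmat1_K]
    exact Statement5Aux.core K R A
  · intro K R A _
    rw [Statement5Aux.Tmat1_R, Statement5Aux.Tmat1_R]
    exact Statement5Aux.core K R A
end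
end
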